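/- Let z < 0, u₀ = (2/π²)(√(1−π²z) − 1), v₀ = −z − u₀, μ_Airy(a) = (1/π)√a·1_{a>0}, and μ_*(a) = [(1/π)√(a−u₀) + (1/(2π²)) log|(√(a−u₀)+√v₀)/(√(a−u₀)−√v₀)|]·1_{a>u₀}. Then the function a ↦ μ_*(a) − μ_Airy(a) is Lebesgue integrable on ℝ and ∫_ℝ (μ_*(a) − μ_Airy(a)) da = 0. -/

import Mathlib

open Real Filter Set MeasureTheory

/-- `u₀ = (2/π²)(√(1−π²z) − 1)`. -/
noncomputable def u0 (z : ℝ) : ℝ := 2 / π ^ 2 * (Real.sqrt (1 - π ^ 2 * z) - 1)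

/-- `v₀ = −z − u₀`. -/
noncomputable def v0 (z : ℝ) : ℝ := -z - u0 z

/-- The Airy equilibrium density `μ_Airy(a) = (1/π)√a·1_{a>0}`. -/
noncomputable def muAiry (a : ℝ) : ℝ := if 0 < a then 1 / π * Real.sqrt a else 0

/-- The optimal density
`μ_*(a) = [(1/π)√(a−u₀) + (1/(2π²)) log|(√(a−u₀)+√v₀)/(√(a−u₀)−√v₀)|]·1_{a>u₀}`. -/
noncomputable def mustar (z : ℝ) (a : ℝ) : ℝ :=
  if u0 z < a then
    1 / π * Real.sqrt (a - u0 z)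
      + 1 / (2 * π ^ 2) * Real.log |(Real.sqrt (a - u0 z) + Real.sqrt (v0 z))
          / (Real.sqrt (a - u0 z) - Real.sqrt (v0 z))|
  else 0

namespace ZeroMassAux

open Topology

/-- The explicit antiderivative of `μ_* − μ_Airy`. -/
noncomputable def HH (z : ℝ) (a : ℝ) : ℝ :=
  2 / (3 * π) * ((Real.sqrt (a - u0 z)) ^ 3 - (Real.sqrt a) ^ 3)
    + 1 / (2 * π ^ 2) *
      ((a - u0 z - v0 z) *
          (Real.log (Real.sqrt (a - u0 z) + Real.sqrt (v0 z))
            - Real.log (Real.sqrt (a - u0 z) - Real.sqrt (v0 z)))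
        + 2 * Real.sqrt (v0 z) * Real.sqrt (a - u0 z))

variable {z : ℝ}

lemma one_lt_sqrt_aux (hz : z < 0) : 1 < Real.sqrt (1 - π ^ 2 * z) := by
  have hq : (0:ℝ) < π ^ 2 * (-z) := mul_pos (by positivity) (by linarith)
  have h1 : (1:ℝ) < 1 - π ^ 2 * z := by nlinarith
  have := Real.sqrt_lt_sqrt (le_of_lt one_pos) h1
  simpa using this

lemma u0_pos (hz : z < 0) : 0 < u0 z := by
  have h1 := one_lt_sqrt_aux hz
  have hπ : (0:ℝ) < 2 / π ^ 2 := by positivity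
  unfold u0
  nlinarith

lemma v0_eq (hz : z < 0) : v0 z = π ^ 2 * (u0 z) ^ 2 / 4 := by
  have h0 : (0:ℝ) ≤ 1 - π ^ 2 * z := by nlinarith [Real.pi_pos]
  have hR : Real.sqrt (1 - π ^ 2 * z) ^ 2 = 1 - π ^ 2 * z := Real.sq_sqrt h0
  have hπ : π ≠ 0 := Real.pi_ne_zero
  unfold v0 u0
  generalize hr : Real.sqrt (1 - π ^ 2 * z) = r at hR ⊢
  field_simp
  linear_combination (-4) * hR

lemma v0_pos (hz : z < 0) : 0 < v0 z := by
  rw [v0_eq hz]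
  have := u0_pos hz
  positivity

lemma sqrt_v0 (hz : z < 0) : Real.sqrt (v0 z) = π * u0 z / 2 := by
  rw [v0_eq hz, show π ^ 2 * (u0 z) ^ 2 / 4 = (π * u0 z / 2) ^ 2 by ring]
  have := u0_pos hz
  exact Real.sqrt_sq (by positivity)


lemma log_ineq_lower {x : ℝ} (h0 : 0 ≤ x) (h1 : x < 1) :
    2 * x ≤ Real.log (1 + x) - Real.log (1 - x) := by
  rcases eq_or_lt_of_le h0 with rfl | hx
  · simp
  · set f : ℝ → ℝ := fun y => Real.log (1 + y) - Real.log (1 - y) with hf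
    set f' : ℝ → ℝ := fun y => (1 + y)⁻¹ + (1 - y)⁻¹ with hf'
    have hderiv : ∀ y ∈ Set.Ioo (0:ℝ) x, HasDerivAt f (f' y) y := by
      intro y hy
      have hy1 : (0:ℝ) < 1 + y := by linarith [hy.1]
      have hy2 : (0:ℝ) < 1 - y := by linarith [hy.2]
      have d1 : HasDerivAt (fun y : ℝ => Real.log (1 + y)) ((1 + y)⁻¹ * 1) y :=
        (Real.hasDerivAt_log hy1.ne').comp y ((hasDerivAt_id y).const_add 1)
      have d2 : HasDerivAt (fun y : ℝ => Real.log (1 - y)) ((1 - y)⁻¹ * (-1)) y :=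
        (Real.hasDerivAt_log hy2.ne').comp y ((hasDerivAt_id y).const_sub 1)
      exact (d1.sub d2).congr_deriv (by simp only [hf']; ring)
    have hcont : ContinuousOn f (Set.Icc 0 x) := by
      intro y hy
      have hy1 : (0:ℝ) < 1 + y := by linarith [hy.1]
      have hy2 : (0:ℝ) < 1 - y := by linarith [hy.2, h1]
      have d1 : HasDerivAt (fun y : ℝ => Real.log (1 + y)) ((1 + y)⁻¹ * 1) y :=
        (Real.hasDerivAt_log hy1.ne').comp y ((hasDerivAt_id y).const_add 1)
      have d2 : HasDerivAt (fun y : ℝ => Real.log (1 - y)) ((1 - y)⁻¹ * (-1)) y :=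
        (Real.hasDerivAt_log hy2.ne').comp y ((hasDerivAt_id y).const_sub 1)
      exact (d1.sub d2).continuousAt.continuousWithinAt
    obtain ⟨c, hc, hceq⟩ := exists_hasDerivAt_eq_slope f f' hx hcont hderiv
    have hc1 : (0:ℝ) < 1 + c := by linarith [hc.1]
    have hc2 : (0:ℝ) < 1 - c := by linarith [hc.2, h1]
    have hfx : f x = f' c * x := by
      have h := hceq
      rw [show (f x - f 0) / (x - 0) = f x / x by simp [hf]] at h
      field_simp at h
      linarith [h]
    have hge : (2:ℝ) ≤ f' c := by
      have h3 : (0:ℝ) < 1 - c ^ 2 := by nlinarith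
      have e : f' c = 2 / (1 - c ^ 2) := by
        simp only [hf']
        field_simp
        ring
      rw [e, le_div_iff₀ h3]
      nlinarith
    calc 2 * x ≤ f' c * x := by nlinarith
      _ = f x := hfx.symm

lemma log_ineq_upper {x : ℝ} (h0 : 0 ≤ x) (h1 : x < 1) :
    Real.log (1 + x) - Real.log (1 - x) ≤ 2 * x / (1 - x ^ 2) := by
  rcases eq_or_lt_of_le h0 with rfl | hx
  · simp
  · set f : ℝ → ℝ := fun y => 2 * y / (1 - y ^ 2) - (Real.log (1 + y) - Real.log (1 - y)) with hf
    set f' : ℝ → ℝ := fun y =>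
      (2 * (1 - y ^ 2) - 2 * y * (-(2 * y))) / (1 - y ^ 2) ^ 2 - ((1 + y)⁻¹ + (1 - y)⁻¹) with hf'
    have hderiv : ∀ y ∈ Set.Ioo (0:ℝ) x, HasDerivAt f (f' y) y := by
      intro y hy
      have hy1 : (0:ℝ) < 1 + y := by linarith [hy.1]
      have hy2 : (0:ℝ) < 1 - y := by linarith [hy.2, h1]
      have hy3 : (1:ℝ) - y ^ 2 ≠ 0 := by nlinarith
      have d1 : HasDerivAt (fun y : ℝ => Real.log (1 + y)) ((1 + y)⁻¹ * 1) y :=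
        (Real.hasDerivAt_log hy1.ne').comp y ((hasDerivAt_id y).const_add 1)
      have d2 : HasDerivAt (fun y : ℝ => Real.log (1 - y)) ((1 - y)⁻¹ * (-1)) y :=
        (Real.hasDerivAt_log hy2.ne').comp y ((hasDerivAt_id y).const_sub 1)
      have d3 : HasDerivAt (fun y : ℝ => 1 - y ^ 2) (-(2 * y)) y := by
        simpa using ((hasDerivAt_pow 2 y).const_sub 1)
      have d4 : HasDerivAt (fun y : ℝ => 2 * y) 2 y := by
        simpa using (hasDerivAt_id y).const_mul 2
      have d5 := d4.div d3 hy3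
      have := d5.sub (d1.sub d2)
      refine this.congr_deriv ?_
      rw [hf']
      ring
    have hcont : ContinuousOn f (Set.Icc 0 x) := by
      intro y hy
      have hy1 : (0:ℝ) < 1 + y := by linarith [hy.1]
      have hy2 : (0:ℝ) < 1 - y := by linarith [hy.2, h1]
      have hy3 : (1:ℝ) - y ^ 2 ≠ 0 := by nlinarith
      have d1 : HasDerivAt (fun y : ℝ => Real.log (1 + y)) ((1 + y)⁻¹ * 1) y :=
        (Real.hasDerivAt_log hy1.ne').comp y ((hasDerivAt_id y).const_add 1)
      have d2 : HasDerivAt (fun y : ℝ => Real.log (1 - y)) ((1 - y)⁻¹ * (-1)) y :=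
        (Real.hasDerivAt_log hy2.ne').comp y ((hasDerivAt_id y).const_sub 1)
      have d3 : HasDerivAt (fun y : ℝ => 1 - y ^ 2) (-(2 * y)) y := by
        simpa using ((hasDerivAt_pow 2 y).const_sub 1)
      have d4 : HasDerivAt (fun y : ℝ => 2 * y) 2 y := by
        simpa using (hasDerivAt_id y).const_mul 2
      exact ((d4.div d3 hy3).sub (d1.sub d2)).continuousAt.continuousWithinAt
    obtain ⟨c, hc, hceq⟩ := exists_hasDerivAt_eq_slope f f' hx hcont hderiv
    have hc1 : (0:ℝ) < 1 + c := by linarith [hc.1]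
    have hc2 : (0:ℝ) < 1 - c := by linarith [hc.2, h1]
    have hfx : f x = f' c * x := by
      have h := hceq
      rw [show (f x - f 0) / (x - 0) = f x / x by simp [hf]] at h
      field_simp at h
      linarith [h]
    have hge : (0:ℝ) ≤ f' c := by
      have hc3 : (1:ℝ) - c ^ 2 ≠ 0 := by nlinarith
      have e : f' c = 4 * c ^ 2 / (1 - c ^ 2) ^ 2 := by
        simp only [hf']
        rw [div_sub' (by positivity), div_eq_div_iff (by positivity) (by positivity)]
        field_simp
        ring
      rw [e]
      positivity
    have : 0 ≤ f x := by nlinarith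
    rw [hf] at this
    linarith

lemma log_ratio_bounds {s w : ℝ} (hw : 0 < w) (hsw : w < s) :
    2 * w / s ≤ Real.log (s + w) - Real.log (s - w) ∧
      Real.log (s + w) - Real.log (s - w) ≤ 2 * w * s / (s ^ 2 - w ^ 2) := by
  have hs : (0:ℝ) < s := hw.trans hsw
  set x := w / s with hx
  have hx0 : 0 < x := by positivity
  have hx1 : x < 1 := by rw [hx, div_lt_one hs]; exact hsw
  have e1 : s + w = s * (1 + x) := by rw [hx]; field_simp
  have e2 : s - w = s * (1 - x) := by rw [hx]; field_simp
  have l1 : Real.log (s + w) = Real.log s + Real.log (1 + x) := by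
    rw [e1, Real.log_mul hs.ne' (by positivity)]
  have l2 : Real.log (s - w) = Real.log s + Real.log (1 - x) := by
    rw [e2, Real.log_mul hs.ne' (by nlinarith)]
  constructor
  · have := log_ineq_lower hx0.le hx1
    rw [l1, l2]
    have : 2 * w / s = 2 * x := by rw [hx]; ring
    rw [this]
    linarith [log_ineq_lower hx0.le hx1]
  · rw [l1, l2]
    have e3 : 2 * w * s / (s ^ 2 - w ^ 2) = 2 * x / (1 - x ^ 2) := by
      rw [hx]
      have h1 : s ^ 2 - w ^ 2 ≠ 0 := by nlinarith
      field_simp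
    rw [e3]
    linarith [log_ineq_upper hx0.le hx1]


lemma sqrt_v0_pos (hz : z < 0) : 0 < Real.sqrt (v0 z) :=
  Real.sqrt_pos.2 (v0_pos hz)

lemma hasDerivAt_sqrt_shift {u a : ℝ} (h : u < a) :
    HasDerivAt (fun b : ℝ => Real.sqrt (b - u)) (1 / (2 * Real.sqrt (a - u))) a := by
  have h0 : a - u ≠ 0 := by linarith
  exact ((Real.hasDerivAt_sqrt h0).comp a ((hasDerivAt_id a).sub_const u)).congr_deriv (by simp)

/-- Derivative of `HH` on `(u₀, ∞) \ {u₀+v₀}`. -/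
lemma hasDerivAt_HH_mid (hz : z < 0) {a : ℝ} (ha : u0 z < a) (hne : a ≠ u0 z + v0 z) :
    HasDerivAt (HH z) (mustar z a - muAiry a) a := by
  set u := u0 z with hu
  set v := v0 z with hv
  set w := Real.sqrt v with hwdef
  have hupos := u0_pos hz
  have hvpos := v0_pos hz
  have hw0 : 0 < w := sqrt_v0_pos hz
  set s := Real.sqrt (a - u) with hsdef
  have hs0 : 0 < s := Real.sqrt_pos.2 (by linarith)
  have hs2 : s ^ 2 = a - u := Real.sq_sqrt (by linarith)
  have hw2 : w ^ 2 = v := Real.sq_sqrt hvpos.le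
  have hsw : s - w ≠ 0 := by
    intro h
    have : s = w := by linarith
    apply hne
    nlinarith [hs2, hw2]
  have hswp : (0:ℝ) < s + w := by positivity
  have ha0 : 0 < a := by linarith
  have hra : Real.sqrt a > 0 := Real.sqrt_pos.2 ha0
  have hra2 : Real.sqrt a ^ 2 = a := Real.sq_sqrt ha0.le
  have hds : HasDerivAt (fun b : ℝ => Real.sqrt (b - u)) (1 / (2 * s)) a :=
    hasDerivAt_sqrt_shift ha
  have hd1 : HasDerivAt (fun b : ℝ => (Real.sqrt (b - u)) ^ 3)
      ((3 : ℕ) * s ^ 2 * (1 / (2 * s))) a := hds.pow 3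
  have hd2 : HasDerivAt (fun b : ℝ => (Real.sqrt b) ^ 3)
      ((3 : ℕ) * Real.sqrt a ^ 2 * (1 / (2 * Real.sqrt a))) a := by
    have := (Real.hasDerivAt_sqrt ha0.ne').pow 3
    exact this
  have hd3 : HasDerivAt (fun b : ℝ => Real.log (Real.sqrt (b - u) + w))
      ((s + w)⁻¹ * (1 / (2 * s))) a :=
    by have := (Real.hasDerivAt_log hswp.ne').comp a (hds.add_const w); exact this
  have hd4 : HasDerivAt (fun b : ℝ => Real.log (Real.sqrt (b - u) - w))
      ((s - w)⁻¹ * (1 / (2 * s))) a :=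
    by have := (Real.hasDerivAt_log hsw).comp a (hds.sub_const w); exact this
  have hd5 : HasDerivAt (fun b : ℝ => b - u - v) 1 a := by
    simpa using ((hasDerivAt_id a).sub_const u).sub_const v
  have hd6 := hd5.mul (hd3.sub hd4)
  have hd7 : HasDerivAt (fun b : ℝ => 2 * w * Real.sqrt (b - u)) (2 * w * (1 / (2 * s))) a :=
    hds.const_mul (2 * w)
  have hdH := ((hd1.sub hd2).const_mul (2 / (3 * π))).add
    ((hd6.add hd7).const_mul (1 / (2 * π ^ 2)))
  have hHH : HH z = fun b =>
      2 / (3 * π) * ((Real.sqrt (b - u)) ^ 3 - (Real.sqrt b) ^ 3)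
        + 1 / (2 * π ^ 2) * ((b - u - v) *
            (Real.log (Real.sqrt (b - u) + w) - Real.log (Real.sqrt (b - u) - w))
          + 2 * w * Real.sqrt (b - u)) := rfl
  rw [hHH]
  refine hdH.congr_deriv ?_
  simp only [Pi.sub_apply]
  have hmu : mustar z a = 1 / π * s
      + 1 / (2 * π ^ 2) * (Real.log (s + w) - Real.log (s - w)) := by
    rw [mustar, if_pos ha]
    rw [← hu, ← hv, ← hwdef, ← hsdef]
    rw [Real.log_abs, Real.log_div hswp.ne' hsw]
  have hmA : muAiry a = 1 / π * Real.sqrt a := by rw [muAiry, if_pos ha0]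
  rw [hmu, hmA]
  have hπ : π ≠ 0 := Real.pi_ne_zero
  have e : (a - u - v) * ((s + w)⁻¹ * (1 / (2 * s)) - (s - w)⁻¹ * (1 / (2 * s)))
      + 2 * w * (1 / (2 * s)) = 0 := by
    have h1 : a - u - v = (s + w) * (s - w) := by nlinarith [hs2, hw2]
    rw [h1]
    field_simp
    ring
  have e2 : (3 : ℕ) * s ^ 2 * (1 / (2 * s)) = 3 / 2 * s := by
    field_simp
    ring
  have e3 : (3 : ℕ) * Real.sqrt a ^ 2 * (1 / (2 * Real.sqrt a)) = 3 / 2 * Real.sqrt a := by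
    rw [sq]
    field_simp
    ring
  rw [e2, e3]
  rw [show (1:ℝ) * (Real.log (s + w) - Real.log (s - w))
      + (a - u - v) * ((s + w)⁻¹ * (1 / (2 * s)) - (s - w)⁻¹ * (1 / (2 * s)))
      + 2 * w * (1 / (2 * s))
      = Real.log (s + w) - Real.log (s - w) by linarith [e]]
  field_simp
  ring

/-- Derivative of `HH` on `(0, u₀)`. -/
lemma hasDerivAt_HH_low (hz : z < 0) {a : ℝ} (h0 : 0 < a) (ha : a < u0 z) :
    HasDerivAt (HH z) (mustar z a - muAiry a) a := by
  have hupos := u0_pos hz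
  have hw0 : 0 < Real.sqrt (v0 z) := sqrt_v0_pos hz
  have heq : HH z =ᶠ[nhds a] fun b => -(2 / (3 * π)) * (Real.sqrt b) ^ 3 := by
    filter_upwards [Iio_mem_nhds ha] with b hb
    have hb0 : Real.sqrt (b - u0 z) = 0 := Real.sqrt_eq_zero'.2 (by simp at hb ⊢; linarith [hb])
    rw [HH, hb0]
    rw [show (0:ℝ) - Real.sqrt (v0 z) = -(Real.sqrt (v0 z)) by ring]
    rw [Real.log_neg_eq_log]
    ring
  have hd : HasDerivAt (fun b : ℝ => -(2 / (3 * π)) * (Real.sqrt b) ^ 3)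
      (-(2 / (3 * π)) * ((3 : ℕ) * Real.sqrt a ^ 2 * (1 / (2 * Real.sqrt a)))) a := by
    exact ((Real.hasDerivAt_sqrt h0.ne').pow 3).const_mul _
  have hra : Real.sqrt a > 0 := Real.sqrt_pos.2 h0
  have hra2 : Real.sqrt a ^ 2 = a := Real.sq_sqrt h0.le
  have : HasDerivAt (HH z) (-(2 / (3 * π)) * ((3 : ℕ) * Real.sqrt a ^ 2 * (1 / (2 * Real.sqrt a)))) a :=
    hd.congr_of_eventuallyEq heq
  convert this using 1
  rw [mustar, if_neg (by linarith), muAiry, if_pos h0]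
  have hπ : π ≠ 0 := Real.pi_ne_zero
  have e3 : (3 : ℕ) * Real.sqrt a ^ 2 * (1 / (2 * Real.sqrt a)) = 3 / 2 * Real.sqrt a := by
    rw [sq]
    field_simp
    ring
  rw [e3]
  field_simp
  ring


lemma HH_eq_low (hz : z < 0) {b : ℝ} (hb : b ≤ u0 z) :
    HH z b = -(2 / (3 * π)) * (Real.sqrt b) ^ 3 := by
  have h1 : Real.sqrt (b - u0 z) = 0 := Real.sqrt_eq_zero'.2 (by linarith)
  rw [HH, h1]
  simp only [zero_add, zero_sub, Real.log_neg_eq_log]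
  ring

lemma HH_zero (hz : z < 0) : HH z 0 = 0 := by
  rw [HH_eq_low hz (u0_pos hz).le]
  simp

/-- On `[u₀, ∞)` the antiderivative can be written in a form which is manifestly
continuous. -/
lemma HH_eq_on_Ici (hz : z < 0) {a : ℝ} (ha : u0 z ≤ a) :
    HH z a = 2 / (3 * π) * ((Real.sqrt (a - u0 z)) ^ 3 - (Real.sqrt a) ^ 3)
      + 1 / (2 * π ^ 2) *
        (2 * (a - u0 z - v0 z) * Real.log (Real.sqrt (a - u0 z) + Real.sqrt (v0 z))
          - (a - u0 z - v0 z) * Real.log (a - u0 z - v0 z)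
          + 2 * Real.sqrt (v0 z) * Real.sqrt (a - u0 z)) := by
  rw [HH]
  rcases eq_or_ne (a - u0 z - v0 z) 0 with h | h
  · rw [h]
    simp
  · have hw0 : 0 < Real.sqrt (v0 z) := sqrt_v0_pos hz
    have hs2 : Real.sqrt (a - u0 z) ^ 2 = a - u0 z := Real.sq_sqrt (by linarith)
    have hw2 : Real.sqrt (v0 z) ^ 2 = v0 z := Real.sq_sqrt (v0_pos hz).le
    have hsw : (0:ℝ) < Real.sqrt (a - u0 z) + Real.sqrt (v0 z) := by
      have := Real.sqrt_nonneg (a - u0 z); linarith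
    have key : Real.sqrt (a - u0 z) - Real.sqrt (v0 z)
        = (a - u0 z - v0 z) / (Real.sqrt (a - u0 z) + Real.sqrt (v0 z)) := by
      rw [eq_div_iff hsw.ne']
      nlinarith [hs2, hw2]
    rw [key, Real.log_div h hsw.ne']
    ring

lemma continuous_HH (hz : z < 0) : ContinuousOn (HH z) (Ici (u0 z)) := by
  have hw0 : 0 < Real.sqrt (v0 z) := sqrt_v0_pos hz
  have hK : Continuous (fun a : ℝ =>
      2 / (3 * π) * ((Real.sqrt (a - u0 z)) ^ 3 - (Real.sqrt a) ^ 3)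
      + 1 / (2 * π ^ 2) *
        (2 * (a - u0 z - v0 z) * Real.log (Real.sqrt (a - u0 z) + Real.sqrt (v0 z))
          - (a - u0 z - v0 z) * Real.log (a - u0 z - v0 z)
          + 2 * Real.sqrt (v0 z) * Real.sqrt (a - u0 z))) := by
    have c1 : Continuous (fun a : ℝ => Real.sqrt (a - u0 z)) :=
      Real.continuous_sqrt.comp (continuous_id.sub continuous_const)
    have c2 : Continuous (fun a : ℝ => Real.log (Real.sqrt (a - u0 z) + Real.sqrt (v0 z))) := by
      apply (c1.add continuous_const).log
      intro x
      have := Real.sqrt_nonneg (x - u0 z)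
      show Real.sqrt (x - u0 z) + Real.sqrt (v0 z) ≠ 0
      exact ne_of_gt (by linarith)
    have c3 : Continuous (fun a : ℝ => (a - u0 z - v0 z) * Real.log (a - u0 z - v0 z)) :=
      Real.continuous_mul_log.comp ((continuous_id.sub continuous_const).sub continuous_const)
    fun_prop
  exact hK.continuousOn.congr (fun a ha => HH_eq_on_Ici hz ha)

lemma integrableOn_log_flip {p q : ℝ} (hpq : p < q) :
    IntegrableOn (fun a : ℝ => Real.log (q - a)) (Ioc p q) := by
  set K := |Real.log (q - p)| + 1 with hK
  set g : ℝ → ℝ := fun a => (q - a) * Real.log (q - a) - (q - a) + K * a with hg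
  have hderiv : ∀ x ∈ Ioo p q, HasDerivAt g (-Real.log (q - x) + K) x := by
    intro x hx
    have hqx : (0:ℝ) < q - x := by linarith [hx.2]
    have d0 : HasDerivAt (fun a : ℝ => q - a) (-1) x := by
      simpa using ((hasDerivAt_id x).const_sub q)
    have d1 : HasDerivAt (fun a : ℝ => (q - a) * Real.log (q - a))
        ((Real.log (q - x) + 1) * (-1)) x :=
      (Real.hasDerivAt_mul_log hqx.ne').comp x d0
    have d2 : HasDerivAt g ((Real.log (q - x) + 1) * (-1) - (-1) + K * 1) x :=
      ((d1.sub d0).add ((hasDerivAt_id x).const_mul K))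
    convert d2 using 1
    ring
  have hcont : ContinuousOn g (Icc p q) := by
    have : Continuous g := by
      have c1 : Continuous (fun a : ℝ => (q - a) * Real.log (q - a)) :=
        Real.continuous_mul_log.comp (continuous_const.sub continuous_id)
      fun_prop
    exact this.continuousOn
  have hpos : ∀ x ∈ Ioo p q, 0 ≤ -Real.log (q - x) + K := by
    intro x hx
    have hqx : (0:ℝ) < q - x := by linarith [hx.2]
    have h1 : Real.log (q - x) ≤ Real.log (q - p) := by
      gcongr
      linarith [hx.1]
    have h2 : Real.log (q - p) ≤ |Real.log (q - p)| := le_abs_self _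
    rw [hK]
    linarith
  have h4 := intervalIntegral.integrableOn_deriv_of_nonneg hcont hderiv hpos
  have h5 : IntegrableOn (fun a : ℝ => (-Real.log (q - a) + K) - K) (Ioc p q) :=
    h4.sub (integrableOn_const measure_Ioc_lt_top.ne)
  have h6 := h5.neg
  have : (fun a : ℝ => Real.log (q - a)) = fun a => -((-Real.log (q - a) + K) - K) := by
    funext a; ring
  rw [this]
  exact h6

lemma integrableOn_log_shift (hz : z < 0) :
    IntegrableOn (fun a : ℝ => Real.log (a - u0 z - v0 z))
      (Ioc (u0 z) (u0 z + v0 z)) := by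
  have h := integrableOn_log_flip (p := u0 z) (q := u0 z + v0 z) (by linarith [v0_pos hz])
  apply h.congr_fun ?_ measurableSet_Ioc
  intro a _
  show Real.log (u0 z + v0 z - a) = Real.log (a - u0 z - v0 z)
  rw [show u0 z + v0 z - a = -(a - u0 z - v0 z) by ring, Real.log_neg_eq_log]


lemma diff_nonneg (hz : z < 0) {a : ℝ} (ha : u0 z + v0 z < a) :
    0 ≤ mustar z a - muAiry a := by
  have hupos := u0_pos hz
  have hvpos := v0_pos hz
  have hw0 : 0 < Real.sqrt (v0 z) := sqrt_v0_pos hz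
  have hau : u0 z < a := by linarith
  have ha0 : (0:ℝ) < a := by linarith
  have hws : Real.sqrt (v0 z) < Real.sqrt (a - u0 z) :=
    Real.sqrt_lt_sqrt hvpos.le (by linarith)
  have hs0 : 0 < Real.sqrt (a - u0 z) := lt_trans hw0 hws
  have hs2 : Real.sqrt (a - u0 z) ^ 2 = a - u0 z := Real.sq_sqrt (by linarith)
  have hw2 : Real.sqrt (v0 z) ^ 2 = v0 z := Real.sq_sqrt hvpos.le
  have hra0 : 0 < Real.sqrt a := Real.sqrt_pos.2 ha0
  have hra2 : Real.sqrt a ^ 2 = a := Real.sq_sqrt ha0.le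
  have hsle : Real.sqrt (a - u0 z) ≤ Real.sqrt a := Real.sqrt_le_sqrt (by linarith)
  have hwu : Real.sqrt (v0 z) = π * u0 z / 2 := sqrt_v0 hz
  have hπ : (0:ℝ) < π := Real.pi_pos
  have hlog := (log_ratio_bounds hw0 hws).1
  rw [mustar, if_pos hau, muAiry, if_pos ha0]
  rw [Real.log_abs, Real.log_div (by positivity)
    (by intro hc; nlinarith [hc])]
  -- key2 : √a - s ≤ u/(2s)
  have hprod : (Real.sqrt a - Real.sqrt (a - u0 z)) * (Real.sqrt a + Real.sqrt (a - u0 z))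
      = u0 z := by nlinarith [hs2, hra2]
  have key2 : Real.sqrt a - Real.sqrt (a - u0 z) ≤ u0 z / (2 * Real.sqrt (a - u0 z)) := by
    rw [le_div_iff₀ (by positivity)]
    nlinarith [hprod, hsle, hs0]
  -- lower bound for log part
  have h1 : 1 / (2 * π ^ 2) * (2 * Real.sqrt (v0 z) / Real.sqrt (a - u0 z))
      ≤ 1 / (2 * π ^ 2) *
        (Real.log (Real.sqrt (a - u0 z) + Real.sqrt (v0 z))
          - Real.log (Real.sqrt (a - u0 z) - Real.sqrt (v0 z))) := by
    apply mul_le_mul_of_nonneg_left hlog (by positivity)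
  have e : 1 / (2 * π ^ 2) * (2 * Real.sqrt (v0 z) / Real.sqrt (a - u0 z))
      = u0 z / (2 * π * Real.sqrt (a - u0 z)) := by
    rw [hwu]
    field_simp
  have key3 : 1 / π * (Real.sqrt a - Real.sqrt (a - u0 z))
      ≤ 1 / π * (u0 z / (2 * Real.sqrt (a - u0 z))) :=
    mul_le_mul_of_nonneg_left key2 (by positivity)
  have e2 : 1 / π * (u0 z / (2 * Real.sqrt (a - u0 z)))
      = u0 z / (2 * π * Real.sqrt (a - u0 z)) := by
    rw [eq_div_iff (by positivity)]
    field_simp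
  rw [e] at h1
  rw [e2] at key3
  nlinarith [h1, key3]

lemma tendsto_sqrt_atTop' : Tendsto Real.sqrt atTop atTop := by
  have h : Real.sqrt = fun x : ℝ => x ^ (1/2 : ℝ) := funext fun x => Real.sqrt_eq_rpow x
  rw [h]
  exact tendsto_rpow_atTop (by norm_num)

set_option maxHeartbeats 1000000 in
lemma tendsto_HH (hz : z < 0) : Tendsto (HH z) atTop (𝓝 0) := by
  have hupos := u0_pos hz
  have hvpos := v0_pos hz
  obtain ⟨w, hwdef⟩ : ∃ w, w = Real.sqrt (v0 z) := ⟨_, rfl⟩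
  have hw0 : 0 < w := hwdef ▸ sqrt_v0_pos hz
  have hwu : w = π * u0 z / 2 := by rw [hwdef]; exact sqrt_v0 hz
  have hw2 : w ^ 2 = v0 z := by rw [hwdef]; exact Real.sq_sqrt hvpos.le
  have hπ : (0:ℝ) < π := Real.pi_pos
  have hπ' : (π:ℝ) ≠ 0 := Real.pi_ne_zero
  have hgto : Tendsto (fun T : ℝ => (u0 z) ^ 2 / π * (Real.sqrt T)⁻¹
      + w ^ 3 / π ^ 2 * (Real.sqrt (T - u0 z))⁻¹) atTop (𝓝 0) := by
    have t1 : Tendsto (fun T : ℝ => (Real.sqrt T)⁻¹) atTop (𝓝 0) :=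
      tendsto_sqrt_atTop'.inv_tendsto_atTop
    have t0 : Tendsto (fun T : ℝ => T - u0 z) atTop atTop :=
      tendsto_atTop_add_const_right atTop (-(u0 z)) tendsto_id
    have t2 : Tendsto (fun T : ℝ => (Real.sqrt (T - u0 z))⁻¹) atTop (𝓝 0) :=
      (tendsto_sqrt_atTop'.comp t0).inv_tendsto_atTop
    have := (t1.const_mul ((u0 z) ^ 2 / π)).add (t2.const_mul (w ^ 3 / π ^ 2))
    simpa using this
  apply squeeze_zero_norm' _ hgto
  filter_upwards [Ioi_mem_atTop (u0 z + v0 z)] with T hT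
  have hT' : u0 z + v0 z < T := hT
  have hTu : u0 z < T := by linarith
  have hT0 : (0:ℝ) < T := by linarith
  obtain ⟨s, hsdef⟩ : ∃ s, s = Real.sqrt (T - u0 z) := ⟨_, rfl⟩
  obtain ⟨t, htdef⟩ : ∃ t, t = Real.sqrt T := ⟨_, rfl⟩
  have hs2 : s ^ 2 = T - u0 z := by rw [hsdef]; exact Real.sq_sqrt (by linarith)
  have ht2 : t ^ 2 = T := by rw [htdef]; exact Real.sq_sqrt hT0.le
  have hws : w < s := by
    rw [hwdef, hsdef]; exact Real.sqrt_lt_sqrt hvpos.le (by linarith)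
  have hs0 : 0 < s := lt_trans hw0 hws
  have ht0 : 0 < t := by rw [htdef]; exact Real.sqrt_pos.2 hT0
  have hst : s ≤ t := by rw [hsdef, htdef]; exact Real.sqrt_le_sqrt (by linarith)
  have hsplit : HH z T
      = (2 / (3 * π) * (s ^ 3 - t ^ 3) + u0 z / π * s)
        + (1 / (2 * π ^ 2) * ((s ^ 2 - w ^ 2) * (Real.log (s + w) - Real.log (s - w))
            - 2 * w * s)) := by
    rw [HH, ← hsdef, ← htdef, ← hwdef]
    rw [show T - u0 z - v0 z = s ^ 2 - w ^ 2 by rw [hs2, hw2]]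
    rw [hwu]
    field_simp
    ring
  have hu' : u0 z = t ^ 2 - s ^ 2 := by rw [hs2, ht2]; ring
  have hE1bound : |2 / (3 * π) * (s ^ 3 - t ^ 3) + u0 z / π * s|
      ≤ (u0 z) ^ 2 / π * t⁻¹ := by
    have e1 : 2 / (3 * π) * (s ^ 3 - t ^ 3) + u0 z / π * s
        = -((t - s) ^ 2 * (2 * t + s)) / (3 * π) := by
      rw [hu']; ring
    have hnn : (0:ℝ) ≤ (t - s) ^ 2 * (2 * t + s) :=
      mul_nonneg (sq_nonneg _) (by linarith)
    rw [e1, abs_div, abs_neg, abs_of_nonneg hnn,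
      abs_of_pos (show (0:ℝ) < 3 * π by positivity)]
    rw [div_le_iff₀ (by positivity), hu']
    have hid : (t ^ 2 - s ^ 2) ^ 2 / π * t⁻¹ * (3 * π)
        = ((t - s) ^ 2 * (3 * (t + s) ^ 2)) * t⁻¹ := by
      field_simp
      ring
    rw [hid, ← sub_nonneg]
    have expand : ((t - s) ^ 2 * (3 * (t + s) ^ 2)) * t⁻¹ - (t - s) ^ 2 * (2 * t + s)
        = ((t - s) ^ 2 * (t ^ 2 + 5 * t * s + 3 * s ^ 2)) * t⁻¹ := by
      field_simp
      ring
    rw [expand]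
    have h4 : (0:ℝ) ≤ t ^ 2 + 5 * t * s + 3 * s ^ 2 := by nlinarith [hs0.le, ht0.le]
    exact mul_nonneg (mul_nonneg (sq_nonneg _) h4) (inv_nonneg.2 ht0.le)
  have hE2bound : |1 / (2 * π ^ 2) * ((s ^ 2 - w ^ 2) * (Real.log (s + w) - Real.log (s - w))
      - 2 * w * s)| ≤ w ^ 3 / π ^ 2 * s⁻¹ := by
    have hb := log_ratio_bounds hw0 hws
    have hsw2 : (0:ℝ) < s ^ 2 - w ^ 2 := by nlinarith [hws, hw0, sq_nonneg (s - w), sq_nonneg (s + w)]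
    have hup : (s ^ 2 - w ^ 2) * (Real.log (s + w) - Real.log (s - w)) ≤ 2 * w * s := by
      have h := mul_le_mul_of_nonneg_left hb.2 hsw2.le
      calc (s ^ 2 - w ^ 2) * (Real.log (s + w) - Real.log (s - w))
          ≤ (s ^ 2 - w ^ 2) * (2 * w * s / (s ^ 2 - w ^ 2)) := h
        _ = 2 * w * s := by field_simp
    have hlo : 2 * w * s - 2 * w ^ 3 / s
        ≤ (s ^ 2 - w ^ 2) * (Real.log (s + w) - Real.log (s - w)) := by
      have h := mul_le_mul_of_nonneg_left hb.1 hsw2.le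
      calc 2 * w * s - 2 * w ^ 3 / s = (s ^ 2 - w ^ 2) * (2 * w / s) := by
            field_simp
        _ ≤ (s ^ 2 - w ^ 2) * (Real.log (s + w) - Real.log (s - w)) := h
    have habs : |(s ^ 2 - w ^ 2) * (Real.log (s + w) - Real.log (s - w)) - 2 * w * s|
        ≤ 2 * w ^ 3 / s := by
      rw [abs_le]
      constructor
      · linarith
      · have : (0:ℝ) ≤ 2 * w ^ 3 / s := by positivity
        linarith
    rw [abs_mul, abs_of_pos (show (0:ℝ) < 1 / (2 * π ^ 2) by positivity)]
    calc 1 / (2 * π ^ 2) * |(s ^ 2 - w ^ 2) * (Real.log (s + w) - Real.log (s - w)) - 2 * w * s|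
        ≤ 1 / (2 * π ^ 2) * (2 * w ^ 3 / s) :=
          mul_le_mul_of_nonneg_left habs (by positivity)
      _ = w ^ 3 / π ^ 2 * s⁻¹ := by
          field_simp
  rw [Real.norm_eq_abs, ← hsdef, ← htdef, hsplit]
  calc |(2 / (3 * π) * (s ^ 3 - t ^ 3) + u0 z / π * s)
        + (1 / (2 * π ^ 2) * ((s ^ 2 - w ^ 2) * (Real.log (s + w) - Real.log (s - w))
            - 2 * w * s))|
      ≤ |2 / (3 * π) * (s ^ 3 - t ^ 3) + u0 z / π * s|
        + |1 / (2 * π ^ 2) * ((s ^ 2 - w ^ 2) * (Real.log (s + w) - Real.log (s - w))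
            - 2 * w * s)| := abs_add_le _ _
    _ ≤ (u0 z) ^ 2 / π * t⁻¹ + w ^ 3 / π ^ 2 * s⁻¹ := add_le_add hE1bound hE2bound

end ZeroMassAux

open ZeroMassAux in
set_option maxHeartbeats 1000000 in
/-- Zero-mass condition: for `z < 0`, the difference `μ_* − μ_Airy` is Lebesgue
integrable on `ℝ` and its integral vanishes. -/
theorem mustar_zero_mass (z : ℝ) (hz : z < 0) :
    Integrable (fun a : ℝ => mustar z a - muAiry a) ∧
    ∫ a : ℝ, (mustar z a - muAiry a) = 0 := by
  have hupos := u0_pos hz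
  have hvpos := v0_pos hz
  have hw0 : 0 < Real.sqrt (v0 z) := sqrt_v0_pos hz
  have hπ : (0:ℝ) < π := Real.pi_pos
  set f : ℝ → ℝ := fun a => mustar z a - muAiry a with hf
  have huv : u0 z < u0 z + v0 z := by linarith
  -- f vanishes on (-∞, 0]
  have hIic : ∀ a ∈ Iic (0:ℝ), f a = 0 := by
    intro a ha
    simp only [hf, mustar, muAiry]
    rw [if_neg (by simp at ha; linarith), if_neg (by simp at ha; linarith)]
    ring
  -- f = -(1/π)√a on (0, u₀]
  have hlowEq : ∀ a ∈ Ioc (0:ℝ) (u0 z), f a = -(1 / π) * Real.sqrt a := by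
    intro a ha
    simp only [hf, mustar, muAiry]
    rw [if_neg (by push_neg; exact ha.2), if_pos ha.1]
    ring
  -- integrability on (0, u₀]
  have i1 : IntegrableOn f (Ioc 0 (u0 z)) := by
    have hc : Continuous fun a : ℝ => -(1 / π) * Real.sqrt a :=
      continuous_const.mul Real.continuous_sqrt
    exact (hc.integrableOn_Ioc).congr_fun (fun a ha => (hlowEq a ha).symm) measurableSet_Ioc
  -- integrability on (u₀, u₀+v₀]
  have hg1cont : Continuous (fun a : ℝ => 1 / π * Real.sqrt (a - u0 z)
      + 1 / (2 * π ^ 2) * (2 * Real.log (Real.sqrt (a - u0 z) + Real.sqrt (v0 z)))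
      - 1 / π * Real.sqrt a) := by
    have c1 : Continuous (fun a : ℝ => Real.sqrt (a - u0 z)) :=
      Real.continuous_sqrt.comp (continuous_id.sub continuous_const)
    have c2 : Continuous (fun a : ℝ => Real.log (Real.sqrt (a - u0 z) + Real.sqrt (v0 z))) := by
      apply (c1.add continuous_const).log
      intro x
      have := Real.sqrt_nonneg (x - u0 z)
      show Real.sqrt (x - u0 z) + Real.sqrt (v0 z) ≠ 0
      exact ne_of_gt (by linarith)
    fun_prop
  have hmidEq : ∀ a ∈ Ioo (u0 z) (u0 z + v0 z),
      f a = (fun a : ℝ => 1 / π * Real.sqrt (a - u0 z)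
        + 1 / (2 * π ^ 2) * (2 * Real.log (Real.sqrt (a - u0 z) + Real.sqrt (v0 z)))
        - 1 / π * Real.sqrt a) a
        + (fun a : ℝ => -(1 / (2 * π ^ 2)) * Real.log (a - u0 z - v0 z)) a := by
    intro a ha
    have ha0 : (0:ℝ) < a := by linarith [ha.1]
    have hs0 : 0 < Real.sqrt (a - u0 z) := Real.sqrt_pos.2 (by linarith [ha.1])
    have hs2 : Real.sqrt (a - u0 z) ^ 2 = a - u0 z := Real.sq_sqrt (by linarith [ha.1])
    have hw2 : Real.sqrt (v0 z) ^ 2 = v0 z := Real.sq_sqrt hvpos.le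
    have hswp : (0:ℝ) < Real.sqrt (a - u0 z) + Real.sqrt (v0 z) := by positivity
    have hne : a - u0 z - v0 z ≠ 0 := by
      have := ha.2; intro hcon; linarith [this]
    have hkey : Real.sqrt (a - u0 z) - Real.sqrt (v0 z)
        = (a - u0 z - v0 z) / (Real.sqrt (a - u0 z) + Real.sqrt (v0 z)) := by
      rw [eq_div_iff hswp.ne']
      nlinarith [hs2, hw2]
    have hsw : Real.sqrt (a - u0 z) - Real.sqrt (v0 z) ≠ 0 := by
      rw [hkey]
      exact div_ne_zero hne hswp.ne'
    simp only [hf, mustar, muAiry]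
    rw [if_pos ha.1, if_pos ha0]
    rw [Real.log_abs, Real.log_div hswp.ne' hsw, hkey, Real.log_div hne hswp.ne']
    ring
  have i2 : IntegrableOn f (Ioc (u0 z) (u0 z + v0 z)) := by
    have hA : IntegrableOn (fun a : ℝ => 1 / π * Real.sqrt (a - u0 z)
        + 1 / (2 * π ^ 2) * (2 * Real.log (Real.sqrt (a - u0 z) + Real.sqrt (v0 z)))
        - 1 / π * Real.sqrt a) (Ioc (u0 z) (u0 z + v0 z)) := hg1cont.integrableOn_Ioc
    have hB : IntegrableOn (fun a : ℝ => -(1 / (2 * π ^ 2)) * Real.log (a - u0 z - v0 z))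
        (Ioc (u0 z) (u0 z + v0 z)) := (integrableOn_log_shift hz).const_mul _
    have hAB : IntegrableOn (fun a : ℝ => (1 / π * Real.sqrt (a - u0 z)
        + 1 / (2 * π ^ 2) * (2 * Real.log (Real.sqrt (a - u0 z) + Real.sqrt (v0 z)))
        - 1 / π * Real.sqrt a) + -(1 / (2 * π ^ 2)) * Real.log (a - u0 z - v0 z))
        (Ioc (u0 z) (u0 z + v0 z)) := hA.add hB
    rw [integrableOn_Ioc_iff_integrableOn_Ioo] at hAB ⊢
    exact (hAB.congr_fun (fun a ha => (hmidEq a ha).symm) measurableSet_Ioo)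
  -- the tail
  have htailderiv : ∀ x ∈ Ioi (u0 z + v0 z), HasDerivAt (HH z) (f x) x := by
    intro x hx
    have hx' : u0 z + v0 z < x := hx
    exact hasDerivAt_HH_mid hz (by linarith) (by intro hcon; rw [hcon] at hx'; linarith)
  have htailcont : ContinuousWithinAt (HH z) (Ici (u0 z + v0 z)) (u0 z + v0 z) := by
    have := (continuous_HH hz) (u0 z + v0 z) (by simp; linarith)
    exact this.mono (Ici_subset_Ici.2 huv.le)
  have htailpos : ∀ x ∈ Ioi (u0 z + v0 z), 0 ≤ f x := fun x hx => diff_nonneg hz hx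
  have i3 : IntegrableOn f (Ioi (u0 z + v0 z)) :=
    integrableOn_Ioi_deriv_of_nonneg htailcont htailderiv htailpos (tendsto_HH hz)
  have hint3 : ∫ x in Ioi (u0 z + v0 z), f x = 0 - HH z (u0 z + v0 z) :=
    integral_Ioi_of_hasDerivAt_of_nonneg htailcont htailderiv htailpos (tendsto_HH hz)
  -- FTC on [0, u₀]
  have hFTC1 : ∫ a in (0:ℝ)..(u0 z), f a = HH z (u0 z) - HH z 0 := by
    apply intervalIntegral.integral_eq_sub_of_hasDeriv_right_of_le hupos.le
    · have hc : Continuous fun b : ℝ => -(2 / (3 * π)) * (Real.sqrt b) ^ 3 := by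
        have := Real.continuous_sqrt
        fun_prop
      exact hc.continuousOn.congr (fun b hb => HH_eq_low hz hb.2)
    · intro x hx
      exact (hasDerivAt_HH_low hz hx.1 hx.2).hasDerivWithinAt
    · rw [intervalIntegrable_iff_integrableOn_Ioc_of_le hupos.le]
      exact i1
  -- FTC on [u₀, u₀+v₀]
  have hFTC2 : ∫ a in (u0 z)..(u0 z + v0 z), f a = HH z (u0 z + v0 z) - HH z (u0 z) := by
    apply intervalIntegral.integral_eq_sub_of_hasDeriv_right_of_le huv.le
    · exact (continuous_HH hz).mono (fun x hx => hx.1)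
    · intro x hx
      exact (hasDerivAt_HH_mid hz hx.1 hx.2.ne).hasDerivWithinAt
    · rw [intervalIntegrable_iff_integrableOn_Ioc_of_le huv.le]
      exact i2
  -- assemble integrability
  have hdisj1 : Disjoint (Ioc (u0 z) (u0 z + v0 z)) (Ioi (u0 z + v0 z)) := by
    rw [Set.disjoint_left]
    rintro a ⟨_, h2⟩ h3
    exact absurd h3 (not_lt.2 h2)
  have e23 : Ioc (u0 z) (u0 z + v0 z) ∪ Ioi (u0 z + v0 z) = Ioi (u0 z) :=
    Ioc_union_Ioi_eq_Ioi huv.le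
  have i23 : IntegrableOn f (Ioi (u0 z)) := by
    rw [← e23]; exact i2.union i3
  have hdisj2 : Disjoint (Ioc (0:ℝ) (u0 z)) (Ioi (u0 z)) := by
    rw [Set.disjoint_left]
    rintro a ⟨_, h2⟩ h3
    exact absurd h3 (not_lt.2 h2)
  have e123 : Ioc (0:ℝ) (u0 z) ∪ Ioi (u0 z) = Ioi (0:ℝ) := Ioc_union_Ioi_eq_Ioi hupos.le
  have iIoi0 : IntegrableOn f (Ioi (0:ℝ)) := by
    rw [← e123]; exact i1.union i23
  have iIic : IntegrableOn f (Iic (0:ℝ)) := by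
    apply (integrable_zero _ _ _).integrableOn.congr_fun
      (fun a ha => (hIic a ha).symm) measurableSet_Iic
  have hInt : Integrable f := by
    rw [← integrableOn_univ, ← Set.Iic_union_Ioi (a := (0:ℝ))]
    exact iIic.union iIoi0
  refine ⟨hInt, ?_⟩
  -- compute the integral
  have hsplit0 : ∫ a, f a = (∫ a in Iic (0:ℝ), f a) + ∫ a in Ioi (0:ℝ), f a :=
    (intervalIntegral.integral_Iic_add_Ioi iIic iIoi0).symm
  have hIic0 : ∫ a in Iic (0:ℝ), f a = 0 := by
    rw [setIntegral_congr_fun measurableSet_Iic hIic]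
    simp
  have hIoi0 : ∫ a in Ioi (0:ℝ), f a
      = (∫ a in Ioc (0:ℝ) (u0 z), f a) + ∫ a in Ioi (u0 z), f a := by
    rw [← e123, setIntegral_union hdisj2 measurableSet_Ioi i1 i23]
  have hIoiu : ∫ a in Ioi (u0 z), f a
      = (∫ a in Ioc (u0 z) (u0 z + v0 z), f a) + ∫ a in Ioi (u0 z + v0 z), f a := by
    rw [← e23, setIntegral_union hdisj1 measurableSet_Ioi i2 i3]
  have hv1 : ∫ a in Ioc (0:ℝ) (u0 z), f a = HH z (u0 z) - HH z 0 := by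
    rw [← intervalIntegral.integral_of_le hupos.le]
    exact hFTC1
  have hv2 : ∫ a in Ioc (u0 z) (u0 z + v0 z), f a = HH z (u0 z + v0 z) - HH z (u0 z) := by
    rw [← intervalIntegral.integral_of_le huv.le]
    exact hFTC2
  rw [hsplit0, hIic0, hIoi0, hIoiu, hv1, hv2, hint3, HH_zero hz]
  ring
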